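/- Define the gap Δ(λ) = √λ/(1+λ) - 1 + (2/π)arctan(√λ) for λ ≥ 1. Then Δ(1) = 0, Δ(λ) > 0 for λ > 1, and Δ attains its maximum at λ = (2+π)/(π-2). -/

import Mathlib

open Real Filter Topology

noncomputable def gapf (t : ℝ) : ℝ := t / (1 + t ^ 2) - 1 + (2 / π) * arctan t

noncomputable def tstar : ℝ := Real.sqrt ((2 + π) / (π - 2))

lemma pi_sub_two_pos : (0:ℝ) < π - 2 := by
  have := Real.pi_gt_three; linarith

lemma tstar_arg_pos : (0:ℝ) < (2 + π) / (π - 2) := by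
  have h := pi_sub_two_pos
  have := Real.pi_pos
  positivity

lemma tstar_sq : tstar ^ 2 = (2 + π) / (π - 2) :=
  Real.sq_sqrt tstar_arg_pos.le

lemma one_lt_tstar : 1 < tstar := by
  rw [tstar, show (1:ℝ) = Real.sqrt 1 from (Real.sqrt_one).symm]
  apply Real.sqrt_lt_sqrt (by norm_num)
  rw [one_lt_div pi_sub_two_pos]
  linarith

lemma gapf_hasDeriv (t : ℝ) :
    HasDerivAt gapf
      ((1 * (1 + t ^ 2) - t * (2 * t ^ 1)) / (1 + t ^ 2) ^ 2 + (2 / π) * (1 / (1 + t ^ 2))) t := by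
  have h1 : (0:ℝ) < 1 + t ^ 2 := by positivity
  have hd : HasDerivAt (fun t : ℝ => t / (1 + t ^ 2))
      ((1 * (1 + t ^ 2) - t * (2 * t ^ 1)) / (1 + t ^ 2) ^ 2) t :=
    (hasDerivAt_id t).div ((hasDerivAt_pow 2 t).const_add 1) h1.ne'
  exact (hd.sub_const 1).add ((Real.hasDerivAt_arctan t).const_mul (2 / π))

lemma gapf_deriv (t : ℝ) :
    deriv gapf t = ((1 - 2 / π) * (tstar ^ 2 - t ^ 2)) / (1 + t ^ 2) ^ 2 := by
  rw [(gapf_hasDeriv t).deriv, tstar_sq]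
  have h1 : (0:ℝ) < 1 + t ^ 2 := by positivity
  have hpi : π ≠ 0 := Real.pi_ne_zero
  have h2 : π - 2 ≠ 0 := pi_sub_two_pos.ne'
  field_simp
  ring

lemma gapf_cont : Continuous gapf :=
  Differentiable.continuous fun t => (gapf_hasDeriv t).differentiableAt

lemma gapf_mono : StrictMonoOn gapf (Set.Icc 1 tstar) := by
  apply strictMonoOn_of_deriv_pos (convex_Icc _ _) gapf_cont.continuousOn
  intro t ht
  rw [interior_Icc, Set.mem_Ioo] at ht
  rw [gapf_deriv]
  have h1 : (0:ℝ) < 1 - 2 / π := by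
    have h2 := pi_sub_two_pos
    have h3 := Real.pi_pos
    rw [sub_pos, div_lt_one h3]; linarith
  have h2 : t ^ 2 < tstar ^ 2 := by
    have h0 : (0:ℝ) < t := lt_trans one_pos ht.1
    nlinarith [ht.2]
  apply div_pos (mul_pos h1 (by linarith)) (by positivity)

lemma gapf_anti : StrictAntiOn gapf (Set.Ici tstar) := by
  apply strictAntiOn_of_deriv_neg (convex_Ici _) gapf_cont.continuousOn
  intro t ht
  rw [interior_Ici, Set.mem_Ioi] at ht
  rw [gapf_deriv]
  have h1 : (0:ℝ) < 1 - 2 / π := by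
    have h2 := pi_sub_two_pos
    have h3 := Real.pi_pos
    rw [sub_pos, div_lt_one h3]; linarith
  have h0 : (0:ℝ) < tstar := lt_trans one_pos one_lt_tstar
  have h2 : tstar ^ 2 - t ^ 2 < 0 := by nlinarith
  have h3 : (0:ℝ) < (1 + t ^ 2) ^ 2 := by positivity
  have := mul_pos h1 (neg_pos.mpr h2)
  apply div_neg_of_neg_of_pos _ h3
  nlinarith

lemma gapf_one : gapf 1 = 0 := by
  have hpi : π ≠ 0 := Real.pi_ne_zero
  rw [gapf, Real.arctan_one]
  field_simp
  ring

lemma gapf_tendsto : Tendsto gapf atTop (𝓝 0) := by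
  have h1 : Tendsto (fun t : ℝ => t / (1 + t ^ 2)) atTop (𝓝 0) := by
    apply squeeze_zero' (g := fun t : ℝ => t⁻¹)
    · filter_upwards [eventually_gt_atTop 0] with t ht
      positivity
    · filter_upwards [eventually_gt_atTop 0] with t ht
      rw [div_le_iff₀ (by positivity), inv_mul_eq_div, le_div_iff₀ ht]
      nlinarith
    · exact tendsto_inv_atTop_zero
  have h2 : Tendsto (fun t : ℝ => (2 / π) * arctan t) atTop (𝓝 ((2 / π) * (π / 2))) :=
    (Real.tendsto_arctan_atTop.mono_right nhdsWithin_le_nhds).const_mul _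
  have h3 := (h1.sub_const 1).add h2
  have hpi : π ≠ 0 := Real.pi_ne_zero
  have : (0:ℝ) - 1 + (2 / π) * (π / 2) = 0 := by field_simp; norm_num
  rwa [this] at h3

lemma gapf_nonneg_of_ge {t : ℝ} (ht : tstar ≤ t) : 0 ≤ gapf t := by
  apply le_of_tendsto gapf_tendsto
  filter_upwards [eventually_ge_atTop t] with s hs
  exact gapf_anti.antitoneOn (Set.mem_Ici.mpr ht) (Set.mem_Ici.mpr (ht.trans hs)) hs

theorem cauchy_gap_properties :
    (Real.sqrt 1 / (1 + 1) - 1 + (2 / π) * arctan (Real.sqrt 1) = 0) ∧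
    (∀ lam : ℝ, 1 < lam →
      0 < Real.sqrt lam / (1 + lam) - 1 + (2 / π) * arctan (Real.sqrt lam)) ∧
    (∀ lam : ℝ, 1 ≤ lam →
      Real.sqrt lam / (1 + lam) - 1 + (2 / π) * arctan (Real.sqrt lam)
        ≤ Real.sqrt ((2 + π) / (π - 2)) / (1 + (2 + π) / (π - 2)) - 1
            + (2 / π) * arctan (Real.sqrt ((2 + π) / (π - 2)))) := by
  have key : ∀ t : ℝ, 1 ≤ t → 0 ≤ gapf t ∧ gapf t ≤ gapf tstar := by
    intro t ht
    rcases le_total t tstar with h | h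
    · constructor
      · rcases eq_or_lt_of_le ht with rfl | ht'
        · rw [gapf_one]
        · rw [← gapf_one]
          exact le_of_lt (gapf_mono (Set.mem_Icc.mpr ⟨le_refl 1, one_lt_tstar.le⟩)
            (Set.mem_Icc.mpr ⟨ht, h⟩) ht')
      · exact gapf_mono.monotoneOn (Set.mem_Icc.mpr ⟨ht, h⟩)
          (Set.mem_Icc.mpr ⟨one_lt_tstar.le, le_refl _⟩) h
    · exact ⟨gapf_nonneg_of_ge h,
        gapf_anti.antitoneOn (Set.mem_Ici.mpr (le_refl _)) (Set.mem_Ici.mpr h) h⟩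
  have hrw : ∀ lam : ℝ, 1 ≤ lam →
      Real.sqrt lam / (1 + lam) - 1 + (2 / π) * arctan (Real.sqrt lam) = gapf (Real.sqrt lam) := by
    intro lam hlam
    rw [gapf, Real.sq_sqrt (by linarith)]
  have hRHS : Real.sqrt ((2 + π) / (π - 2)) / (1 + (2 + π) / (π - 2)) - 1
      + (2 / π) * arctan (Real.sqrt ((2 + π) / (π - 2))) = gapf tstar := by
    rw [gapf, tstar, Real.sq_sqrt tstar_arg_pos.le]
  refine ⟨?_, ?_, ?_⟩
  · rw [hrw 1 le_rfl, Real.sqrt_one, gapf_one]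
  · intro lam hlam
    rw [hrw lam hlam.le]
    have ht : 1 < Real.sqrt lam := by
      rw [show (1:ℝ) = Real.sqrt 1 from Real.sqrt_one.symm]
      exact Real.sqrt_lt_sqrt (by norm_num) hlam
    rcases le_or_gt (Real.sqrt lam) tstar with h | h
    · rw [← gapf_one]
      exact gapf_mono (Set.mem_Icc.mpr ⟨le_refl 1, one_lt_tstar.le⟩)
        (Set.mem_Icc.mpr ⟨ht.le, h⟩) ht
    · have h1 := gapf_nonneg_of_ge (t := Real.sqrt lam + 1) (by linarith)
      have h2 := gapf_anti (Set.mem_Ici.mpr h.le) (Set.mem_Ici.mpr (by linarith : tstar ≤ Real.sqrt lam + 1)) (by linarith)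
      linarith
  · intro lam hlam
    rw [hrw lam hlam, hRHS]
    have ht : 1 ≤ Real.sqrt lam := by
      rw [show (1:ℝ) = Real.sqrt 1 from Real.sqrt_one.symm]
      exact Real.sqrt_le_sqrt hlam
    exact (key _ ht).2
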